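/- For a scalar linear stochastic subsystem with dynamics T⁺ = λT + γT_h ν + ηw + βT_e + ς (λ = 1 − 2η − β − γν), the function V(T, T̂) = (T − T̂)² satisfies, for ν = ν̂ (trivial interface) and any w, ŵ: E[V(T⁺, T̂⁺) | ·] − V(T,T̂) ≤ −(1−κ̂)V(T,T̂) + (1+2/π)δ² + [w−ŵ; T−T̂]ᵀ [η²(1+π), ηλ; ηλ, −cη(1+π)] [w−ŵ; T−T̂], provided the scalar matrix inequality [(1+π)λ², λη; λη, (1+π)η²] ⪯ [κ̂ + (−cη(1+π)), ηλ; ηλ, η²(1+π)] holds (i.e., (1+π)λ² ≤ κ̂ − cη(1+π) and (1+π)η² ≤ η²(1+π)), where T̂⁺ = Π(λT̂ + γT_h ν̂ + ηŵ + βT_e + ς) with ‖Π(z) − z‖ ≤ δ. -/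

import Mathlib

open MeasureTheory Matrix

lemma aux_pt (pihat lam η κhat c δ s e F : ℝ) (hpi : 0 < pihat)
    (h1 : (1 + pihat) * lam ^ 2 ≤ κhat + (-(c * η * (1 + pihat))))
    (hF : |F| ≤ δ) :
    (lam * s + η * e + F) ^ 2 ≤
      κhat * s ^ 2 + (1 + 2 / pihat) * δ ^ 2 +
        (η ^ 2 * (1 + pihat) * e ^ 2 + 2 * η * lam * e * s
          + (-(c * η * (1 + pihat))) * s ^ 2) := by
  have hF2 : F ^ 2 ≤ δ ^ 2 := sq_le_sq' (neg_le_of_abs_le hF) (le_of_abs_le hF)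
  set q := δ ^ 2 / pihat with hqdef
  have hq : q * pihat = δ ^ 2 := by rw [hqdef]; field_simp
  have hq' : (1 + 2 / pihat) * δ ^ 2 = δ ^ 2 + 2 * q := by rw [hqdef]; field_simp
  rw [hq']
  have hy1 : 2 * (lam * s) * F ≤ pihat * (lam * s) ^ 2 + q := by
    nlinarith [sq_nonneg (pihat * (lam * s) - F), hq, hF2, hpi]
  have hy2 : 2 * (η * e) * F ≤ pihat * (η * e) ^ 2 + q := by
    nlinarith [sq_nonneg (pihat * (η * e) - F), hq, hF2, hpi]
  nlinarith [hy1, hy2, hF2, sq_nonneg s, sq_nonneg e]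

theorem stmt_17 {Ω : Type*} {mΩ : MeasurableSpace Ω} (μ : Measure Ω)
    [IsProbabilityMeasure μ] (ς : Ω → ℝ) (hς : Measurable ς)
    (η β γ Th Te κhat pihat c δ : ℝ)
    (hκ0 : 0 < κhat) (hκ1 : κhat < 1) (hpi : 0 < pihat) (hc : 0 < c) (hδ : 0 ≤ δ)
    (Pi : ℝ → ℝ) (hPimeas : Measurable Pi) (hPi : ∀ z, |Pi z - z| ≤ δ)
    (ν : ℝ) (lam : ℝ) (hlam : lam = 1 - 2 * η - β - γ * ν)
    (hLoewner :
      ((Matrix.of ![![κhat + (-(c * η * (1 + pihat))), η * lam],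
                    ![η * lam, η ^ 2 * (1 + pihat)]]) -
       (Matrix.of ![![(1 + pihat) * lam ^ 2, lam * η],
                    ![lam * η, (1 + pihat) * η ^ 2]])).PosSemidef) :
    ∀ T That w wh : ℝ,
      (∫ ω, ((lam * T + γ * Th * ν + η * w + β * Te + ς ω) -
              Pi (lam * That + γ * Th * ν + η * wh + β * Te + ς ω)) ^ 2 ∂μ)
          - (T - That) ^ 2
        ≤ -(1 - κhat) * (T - That) ^ 2 + (1 + 2 / pihat) * δ ^ 2 +
          (![w - wh, T - That] ⬝ᵥ
            ((Matrix.of ![![η ^ 2 * (1 + pihat), η * lam],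
                          ![η * lam, -(c * η * (1 + pihat))]]) *ᵥ
              ![w - wh, T - That])) := by
  -- extract scalar inequality from Loewner hypothesis
  have h1 : (1 + pihat) * lam ^ 2 ≤ κhat + (-(c * η * (1 + pihat))) := by
    have := hLoewner.dotProduct_mulVec_nonneg ![1, 0]
    simp [Matrix.mulVec, dotProduct, Fin.sum_univ_two, Matrix.sub_apply] at this
    linarith
  intro T That w wh
  set s := T - That with hs
  set e := w - wh with he
  set C := κhat * s ^ 2 + (1 + 2 / pihat) * δ ^ 2 +
      (η ^ 2 * (1 + pihat) * e ^ 2 + 2 * η * lam * e * s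
        + (-(c * η * (1 + pihat))) * s ^ 2) with hC
  set f := fun ω => ((lam * T + γ * Th * ν + η * w + β * Te + ς ω) -
      Pi (lam * That + γ * Th * ν + η * wh + β * Te + ς ω)) ^ 2 with hf
  have hpt : ∀ ω, f ω ≤ C := by
    intro ω
    have hre : f ω = (lam * s + η * e +
        -(Pi (lam * That + γ * Th * ν + η * wh + β * Te + ς ω) -
          (lam * That + γ * Th * ν + η * wh + β * Te + ς ω))) ^ 2 := by
      simp only [hf, hs, he]; ring
    rw [hre]
    exact aux_pt pihat lam η κhat c δ s e _ hpi h1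
      (by rw [abs_neg]; exact hPi _)
  have hmeas : Measurable f := by
    apply Measurable.pow_const
    exact (measurable_const.add hς).sub (hPimeas.comp (measurable_const.add hς))
  have hint : Integrable f μ := by
    refine Integrable.mono' (integrable_const C) hmeas.aestronglyMeasurable ?_
    filter_upwards with ω
    rw [Real.norm_of_nonneg (sq_nonneg _)]
    exact hpt ω
  have hIle : integral μ f ≤ C := by
    calc integral μ f ≤ ∫ _, C ∂μ := integral_mono hint (integrable_const C) hpt
    _ = C := by simp
  have hmat : (![e, s] ⬝ᵥ
      ((Matrix.of ![![η ^ 2 * (1 + pihat), η * lam],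
                    ![η * lam, -(c * η * (1 + pihat))]]) *ᵥ ![e, s]))
      = η ^ 2 * (1 + pihat) * e ^ 2 + 2 * η * lam * e * s
        + (-(c * η * (1 + pihat))) * s ^ 2 := by
    simp [Matrix.mulVec, dotProduct, Fin.sum_univ_two]
    ring
  rw [hmat]
  rw [hC] at hIle
  linarith [hIle]
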